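/- For every triangle uvw of G with d(u) = d(v) = 3 and d(w) ≤ 6, the pendant neighbor of u and the pendant neighbor of v each have degree at least 6. -/

import Mathlib

/-- A graph is `(c 0, c 1, c 2)`-colorable if its vertices can be colored with
colors `0, 1, 2` so that every vertex colored `i` has at most `c i` neighbors of its
own color.  With `c = ![1,1,0]` this is a `(1,1,0)`-coloring. -/
def Colorable3 {α : Type*} (G : SimpleGraph α) (c : Fin 3 → ℕ) : Prop :=
  ∃ f : α → Fin 3, ∀ v, {u | G.Adj v u ∧ f u = f v}.ncard ≤ c (f v)

/-- `G` contains no cycle of length 4 and no cycle of length 5. -/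
def NoC45 {V : Type*} (G : SimpleGraph V) : Prop :=
  ∀ (v : V) (w : G.Walk v v), w.IsCycle → w.length ≠ 4 ∧ w.length ≠ 5

/-- `G` is a minimal counterexample: `G` is not `(c 0, c 1, c 2)`-colorable, but every
proper subgraph of `G` is. -/
def MinCE {V : Type*} (G : SimpleGraph V) (c : Fin 3 → ℕ) : Prop :=
  ¬ Colorable3 G c ∧ ∀ H : G.Subgraph, H ≠ ⊤ → Colorable3 H.coe c

/-- `u`, `v`, `w` form a triangle of `G`. -/
def TriOn {V : Type*} (G : SimpleGraph V) (u v w : V) : Prop :=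
  G.Adj u v ∧ G.Adj v w ∧ G.Adj u w

section Helpers

open SimpleGraph

variable {V : Type*} [Fintype V]

private lemma cycle4' {G : SimpleGraph V} (hG : NoC45 G)
    {a b c d : V} (hab : G.Adj a b) (hbc : G.Adj b c) (hcd : G.Adj c d) (hda : G.Adj d a)
    (hac : a ≠ c) (hbd : b ≠ d) : False := by
  refine (hG a (.cons hab (.cons hbc (.cons hcd (.cons hda .nil)))) ?_).1 rfl
  constructor
  · constructor
    · constructor
      simp [Walk.edges, hab.ne, hbc.ne, hcd.ne, hda.ne, hac, hbd, Sym2.eq, Sym2.rel_iff',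
        hab.ne', hbc.ne', hcd.ne', hda.ne', hac.symm, hbd.symm]
    · simp
  · simp [Walk.support, hab.ne, hbc.ne, hcd.ne, hda.ne', hac, hbd, hac.symm, hbd.symm]
    exact ⟨fun h => hab.ne' h, fun h => hda.ne h⟩

private lemma sEmpty (s : Set V) (n : ℕ) (h : ∀ y, y ∉ s) : s.ncard ≤ n := by
  rw [Set.eq_empty_iff_forall_notMem.mpr h]
  simp

private lemma sSub3 {s : Set V} {a b c : V} (h : s ⊆ {a, b, c}) : s.ncard ≤ 3 := by
  refine le_trans (Set.ncard_le_ncard h (Set.toFinite _)) ?_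
  refine le_trans (Set.ncard_insert_le _ _) ?_
  have h1 := Set.ncard_insert_le b ({c} : Set V)
  have h2 : ({c} : Set V).ncard = 1 := Set.ncard_singleton c
  omega

private lemma sSubIns {s t : Set V} {a : V} (h : s ⊆ insert a t) (ht : t.ncard ≤ 2) :
    s.ncard ≤ 3 := by
  refine le_trans (Set.ncard_le_ncard h (Set.toFinite _)) ?_
  have := Set.ncard_insert_le a t
  omega

private lemma aux2 {Z S : Set V} {a b : V} (hZS : Z ⊆ S) (h3 : 3 ≤ Z.ncard)
    (ha : a ∈ S) (hb : b ∈ S) (haZ : a ∉ Z) (hbZ : b ∉ Z) (hab : a ≠ b) : 5 ≤ S.ncard := by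
  have hsub : insert a (insert b Z) ⊆ S := by
    intro y hy
    rcases hy with rfl | hy
    · exact ha
    · rcases hy with rfl | hy
      · exact hb
      · exact hZS hy
  have h1 : (insert b Z).ncard = Z.ncard + 1 := Set.ncard_insert_of_notMem hbZ (Set.toFinite _)
  have h2 : (insert a (insert b Z)).ncard = (insert b Z).ncard + 1 := by
    refine Set.ncard_insert_of_notMem ?_ (Set.toFinite _)
    simp only [Set.mem_insert_iff]
    push_neg
    exact ⟨hab, haZ⟩
  have := Set.ncard_le_ncard hsub (Set.toFinite _)
  omega

private lemma aux3 {Z S : Set V} {a b c : V} (hZS : Z ⊆ S) (h3 : 3 ≤ Z.ncard)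
    (ha : a ∈ S) (hb : b ∈ S) (hc : c ∈ S) (haZ : a ∉ Z) (hbZ : b ∉ Z) (hcZ : c ∉ Z)
    (hab : a ≠ b) (hac : a ≠ c) (hbc : b ≠ c) : 6 ≤ S.ncard := by
  have hsub : insert a (insert b (insert c Z)) ⊆ S := by
    intro y hy
    rcases hy with rfl | hy
    · exact ha
    · rcases hy with rfl | hy
      · exact hb
      · rcases hy with rfl | hy
        · exact hc
        · exact hZS hy
  have h1 : (insert c Z).ncard = Z.ncard + 1 := Set.ncard_insert_of_notMem hcZ (Set.toFinite _)
  have h2 : (insert b (insert c Z)).ncard = (insert c Z).ncard + 1 := by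
    refine Set.ncard_insert_of_notMem ?_ (Set.toFinite _)
    simp only [Set.mem_insert_iff]
    push_neg
    exact ⟨hbc, hbZ⟩
  have h3' : (insert a (insert b (insert c Z))).ncard = (insert b (insert c Z)).ncard + 1 := by
    refine Set.ncard_insert_of_notMem ?_ (Set.toFinite _)
    simp only [Set.mem_insert_iff]
    push_neg
    exact ⟨hab, hac, haZ⟩
  have := Set.ncard_le_ncard hsub (Set.toFinite _)
  omega

private lemma build {G : SimpleGraph V} (g : V → Fin 3)
    (h0 : ∀ z, g z = 0 → {y | G.Adj z y ∧ g y = 0}.ncard ≤ 3)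
    (h12 : ∀ z, g z ≠ 0 → ∀ y, G.Adj z y → g y ≠ g z)
    (z : V) : {y | G.Adj z y ∧ g y = g z}.ncard ≤ (![3, 0, 0] : Fin 3 → ℕ) (g z) := by
  by_cases hz : g z = 0
  · rw [hz]
    exact h0 z hz
  · have hval : (![3, 0, 0] : Fin 3 → ℕ) (g z) = 0 := by
      rcases (by decide : ∀ c : Fin 3, c = 0 ∨ c = 1 ∨ c = 2) (g z) with h | h | h
      · exact absurd h hz
      · rw [h]; rfl
      · rw [h]; rfl
    rw [hval]
    exact sEmpty _ 0 (fun y hy => h12 z hz y hy.1 hy.2)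

end Helpers

/-- For every triangle `u v w` of `G` with `d(u) = d(v) = 3` and `d(w) ≤ 6`, the
pendant neighbor of `u` and the pendant neighbor of `v` (their unique neighbors
outside the triangle) each have degree at least 6. -/
theorem stmt15 {V : Type*} [Fintype V] (G : SimpleGraph V) [DecidableRel G.Adj]
    (hG : NoC45 G) (hmin : MinCE G ![3, 0, 0]) :
    ∀ u v w : V, TriOn G u v w →
      G.degree u = 3 → G.degree v = 3 → G.degree w ≤ 6 →
      (∀ x : V, G.Adj u x → x ≠ v → x ≠ w → 6 ≤ G.degree x) ∧
      (∀ x : V, G.Adj v x → x ≠ u → x ≠ w → 6 ≤ G.degree x) := by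
  classical
  suffices key : ∀ u v w : V, G.Adj u v → G.Adj v w → G.Adj u w →
      G.degree u = 3 → G.degree v = 3 → G.degree w ≤ 6 →
      ∀ x : V, G.Adj u x → x ≠ v → x ≠ w → 6 ≤ G.degree x by
    intro u v w htri hdu hdv hdw
    obtain ⟨huv, hvw, huw⟩ := htri
    exact ⟨key u v w huv hvw huw hdu hdv hdw,
           key v u w huv.symm huw hvw hdv hdu hdw⟩
  intro u v w huv hvw huw hdu hdv hdw x hux hxv hxw
  by_contra hdeg
  push_neg at hdeg
  have hdx5 : G.degree x ≤ 5 := by omega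
  -- distinctness
  have hxu : x ≠ u := hux.ne'
  -- non-adjacencies from 4-cycle freeness
  have hvx : ¬ G.Adj v x := fun h =>
    cycle4' hG huw hvw.symm h hux.symm huv.ne (fun e => hxw e.symm)
  have hwx : ¬ G.Adj w x := fun h =>
    cycle4' hG huv hvw h hux.symm huw.ne (fun e => hxv e.symm)
  -- neighborhood of u
  have hdeg_u : (G.neighborFinset u).card = 3 := hdu
  have hsubu : ({v, w, x} : Finset V) ⊆ G.neighborFinset u := by
    intro y hy
    rw [SimpleGraph.mem_neighborFinset]
    simp only [Finset.mem_insert, Finset.mem_singleton] at hy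
    rcases hy with rfl | rfl | rfl
    · exact huv
    · exact huw
    · exact hux
  have hcard3 : ({v, w, x} : Finset V).card = 3 := by
    rw [Finset.card_insert_of_notMem (by simp [hvw.ne, Ne.symm hxv]),
      Finset.card_insert_of_notMem (by simp [Ne.symm hxw]), Finset.card_singleton]
  have hNF : G.neighborFinset u = {v, w, x} :=
    (Finset.eq_of_subset_of_card_le hsubu (by rw [hcard3, hdeg_u])).symm
  have hNu : ∀ y, G.Adj u y ↔ (y = v ∨ y = w ∨ y = x) := by
    intro y
    rw [← SimpleGraph.mem_neighborFinset, hNF]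
    simp
  have hNu' : ∀ z, G.Adj z u → z = v ∨ z = w ∨ z = x := fun z h => (hNu z).mp h.symm
  -- neighborhood of v : third neighbor v'
  have hdeg_v : (G.neighborFinset v).card = 3 := hdv
  have hsubv : ({u, w} : Finset V) ⊆ G.neighborFinset v := by
    intro y hy
    rw [SimpleGraph.mem_neighborFinset]
    simp only [Finset.mem_insert, Finset.mem_singleton] at hy
    rcases hy with rfl | rfl
    · exact huv.symm
    · exact hvw
  have hcard2 : ({u, w} : Finset V).card = 2 := by
    rw [Finset.card_insert_of_notMem (by simp [huw.ne]), Finset.card_singleton]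
  have hcard1 : (G.neighborFinset v \ {u, w}).card = 1 := by
    rw [Finset.card_sdiff_of_subset hsubv, hdeg_v, hcard2]
  obtain ⟨v', hv'⟩ := Finset.card_eq_one.mp hcard1
  have hv'mem : v' ∈ G.neighborFinset v \ ({u, w} : Finset V) := by rw [hv']; simp
  have hv'u : v' ≠ u := by
    simp only [Finset.mem_sdiff, Finset.mem_insert, Finset.mem_singleton] at hv'mem
    exact fun e => hv'mem.2 (Or.inl e)
  have hv'w : v' ≠ w := by
    simp only [Finset.mem_sdiff, Finset.mem_insert, Finset.mem_singleton] at hv'mem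
    exact fun e => hv'mem.2 (Or.inr e)
  have hAdjvv' : G.Adj v v' := by
    simp only [Finset.mem_sdiff, SimpleGraph.mem_neighborFinset] at hv'mem
    exact hv'mem.1
  have hNFv : G.neighborFinset v = {u, w, v'} := by
    have h1 := Finset.sdiff_union_of_subset hsubv
    rw [hv'] at h1
    rw [← h1]
    ext y
    simp only [Finset.mem_union, Finset.mem_singleton, Finset.mem_insert]
    tauto
  have hNv : ∀ y, G.Adj v y ↔ (y = u ∨ y = w ∨ y = v') := by
    intro y
    rw [← SimpleGraph.mem_neighborFinset, hNFv]
    simp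
  have hNv' : ∀ z, G.Adj z v → z = u ∨ z = w ∨ z = v' := fun z h => (hNv z).mp h.symm
  -- lift a coloring of G - u
  set H : G.Subgraph := (⊤ : G.Subgraph).deleteVerts {u} with hH
  have hne : H ≠ ⊤ := by
    intro h
    have : u ∈ H.verts := by rw [h]; trivial
    simp [hH] at this
  obtain ⟨f₀, hf₀⟩ := hmin.2 H hne
  have hmem : ∀ z : V, z ≠ u → z ∈ H.verts := by intro z hz; simp [hH, hz]
  set f : V → Fin 3 := fun z => if h : z = u then 0 else f₀ ⟨z, hmem z h⟩ with hf
  have HQ : ∀ z, z ≠ u →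
      {y | y ≠ u ∧ G.Adj z y ∧ f y = f z}.ncard ≤ (![3, 0, 0] : Fin 3 → ℕ) (f z) := by
    intro z hz
    have hfz : f z = f₀ ⟨z, hmem z hz⟩ := by simp [hf, hz]
    rw [hfz]
    refine le_trans (le_of_eq ?_) (hf₀ ⟨z, hmem z hz⟩)
    have himg : {y | y ≠ u ∧ G.Adj z y ∧ f y = f₀ ⟨z, hmem z hz⟩}
        = Subtype.val '' {q | H.coe.Adj ⟨z, hmem z hz⟩ q ∧ f₀ q = f₀ ⟨z, hmem z hz⟩} := by
      ext y
      simp only [Set.mem_image, Set.mem_setOf_eq]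
      constructor
      · rintro ⟨hyu, hadj, hcol⟩
        refine ⟨⟨y, hmem y hyu⟩, ⟨?_, ?_⟩, rfl⟩
        · rw [SimpleGraph.Subgraph.coe_adj]
          simp [hH, SimpleGraph.Subgraph.deleteVerts_adj, hz, hyu, hadj]
        · simpa [hf, hyu] using hcol
      · rintro ⟨q, ⟨hadj, hcol⟩, rfl⟩
        rw [SimpleGraph.Subgraph.coe_adj] at hadj
        simp only [hH, SimpleGraph.Subgraph.deleteVerts_adj] at hadj
        have hqu : (q : V) ≠ u := by simpa using hadj.2.2.2.1
        refine ⟨hqu, hadj.2.2.2.2, by simpa [hf, hqu] using hcol⟩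
    rw [himg, Set.ncard_image_of_injective _ Subtype.val_injective]
  have HQ1 : ∀ z y, z ≠ u → y ≠ u → G.Adj z y → f y = f z → f z = 0 := by
    intro z y hz hy hadj hcol
    by_contra h0
    have hle := HQ z hz
    have hval : (![3, 0, 0] : Fin 3 → ℕ) (f z) = 0 := by
      rcases (by decide : ∀ c : Fin 3, c = 0 ∨ c = 1 ∨ c = 2) (f z) with h | h | h
      · exact absurd h h0
      · rw [h]; rfl
      · rw [h]; rfl
    rw [hval] at hle
    have hmem' : y ∈ {y | y ≠ u ∧ G.Adj z y ∧ f y = f z} := ⟨hy, hadj, hcol⟩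
    have hpos : 0 < {y | y ≠ u ∧ G.Adj z y ∧ f y = f z}.ncard :=
      (Set.ncard_pos (Set.toFinite _)).mpr ⟨y, hmem'⟩
    omega
  have HQ0 : ∀ z, z ≠ u → f z = 0 → {y | y ≠ u ∧ G.Adj z y ∧ f y = 0}.ncard ≤ 3 := by
    intro z hz h0
    have := HQ z hz
    rw [h0] at this
    exact this
  -- degree bounds as set bounds
  have hDW : {y | y ≠ u ∧ G.Adj w y}.ncard ≤ 5 := by
    have h1 : {y | y ≠ u ∧ G.Adj w y} = (↑(G.neighborFinset w) : Set V) \ {u} := by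
      ext y
      simp [SimpleGraph.mem_neighborFinset, and_comm]
    have h2 : u ∈ (↑(G.neighborFinset w) : Set V) := by
      simp [SimpleGraph.mem_neighborFinset]
      exact huw.symm
    rw [h1, Set.ncard_diff_singleton_of_mem h2, Set.ncard_coe_finset]
    have h3 : (G.neighborFinset w).card = G.degree w := rfl
    omega
  have hDX : {y | y ≠ u ∧ G.Adj x y}.ncard ≤ 4 := by
    have h1 : {y | y ≠ u ∧ G.Adj x y} = (↑(G.neighborFinset x) : Set V) \ {u} := by
      ext y
      simp [SimpleGraph.mem_neighborFinset, and_comm]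
    have h2 : u ∈ (↑(G.neighborFinset x) : Set V) := by
      simp [SimpleGraph.mem_neighborFinset]
      exact hux.symm
    rw [h1, Set.ncard_diff_singleton_of_mem h2, Set.ncard_coe_finset]
    have h3 : (G.neighborFinset x).card = G.degree x := rfl
    omega
  -- fin 3 facts
  have h10 : (1 : Fin 3) ≠ 0 := by decide
  have h20 : (2 : Fin 3) ≠ 0 := by decide
  have h12ne : (1 : Fin 3) ≠ 2 := by decide
  -- main case analysis
  rcases em (f v = 1 ∨ f w = 1 ∨ f x = 1) with hA1 | hA1
  rcases em (f v = 2 ∨ f w = 2 ∨ f x = 2) with hA2 | hA2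
  · -- both colors 1 and 2 appear among f v, f w, f x
    rcases em (f x = 0 ∧ 3 ≤ {y | y ≠ u ∧ G.Adj x y ∧ f y = 0}.ncard) with hC1 | hC1
    · -- Case C1 : x is colored 0 and saturated
      obtain ⟨hfx0, hZx⟩ := hC1
      have hfv : f v ≠ 0 := by
        intro h0
        have h1' : f w = 1 := by
          rcases hA1 with h | h | h
          · rw [h0] at h; exact absurd h (Ne.symm h10)
          · exact h
          · rw [hfx0] at h; exact absurd h (Ne.symm h10)
        have h2' : f w = 2 := by
          rcases hA2 with h | h | h
          · rw [h0] at h; exact absurd h (Ne.symm h20)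
          · exact h
          · rw [hfx0] at h; exact absurd h (Ne.symm h20)
        rw [h1'] at h2'; exact h12ne h2'
      have hfw : f w ≠ 0 := by
        intro h0
        have h1' : f v = 1 := by
          rcases hA1 with h | h | h
          · exact h
          · rw [h0] at h; exact absurd h (Ne.symm h10)
          · rw [hfx0] at h; exact absurd h (Ne.symm h10)
        have h2' : f v = 2 := by
          rcases hA2 with h | h | h
          · exact h
          · rw [h0] at h; exact absurd h (Ne.symm h20)
          · rw [hfx0] at h; exact absurd h (Ne.symm h20)
        rw [h1'] at h2'; exact h12ne h2'
      -- choose a nonzero color c with no neighbor of x (other than u) colored c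
      obtain ⟨c, hc0, hkey⟩ : ∃ c : Fin 3, c ≠ 0 ∧ ∀ y, y ≠ u → G.Adj x y → f y ≠ c := by
        rcases em (∃ o, o ≠ u ∧ G.Adj x o ∧ f o = 1) with hone | hone
        · refine ⟨2, h20, ?_⟩
          intro y hyu hadj hy2
          obtain ⟨o, hou, hxo, ho1⟩ := hone
          have h5 : 5 ≤ {y | y ≠ u ∧ G.Adj x y}.ncard := by
            refine aux2 (fun t ht => ⟨ht.1, ht.2.1⟩) hZx ⟨hou, hxo⟩ ⟨hyu, hadj⟩ ?_ ?_ ?_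
            · intro hm; rw [hm.2.2] at ho1; exact h10 ho1.symm
            · intro hm; rw [hm.2.2] at hy2; exact h20 hy2.symm
            · intro e; rw [e] at ho1; rw [ho1] at hy2; exact h12ne hy2
          omega
        · refine ⟨1, h10, ?_⟩
          intro y hyu hadj hy1
          exact hone ⟨y, hyu, hadj, hy1⟩
      set g : V → Fin 3 := fun z => if z = u then 0 else if z = x then c else f z with hg
      have hgu : g u = 0 := by simp [hg]
      have hgx : g x = c := by simp [hg, hxu]
      have hgelse : ∀ z, z ≠ u → z ≠ x → g z = f z := by
        intro z h1 h2; simp [hg, h1, h2]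
      apply hmin.1
      refine ⟨g, build g ?_ ?_⟩
      · intro z hz0
        rcases em (u = z) with rfl | hzu
        · refine sSub3 (a := v) (b := w) (c := x) ?_
          rintro y ⟨hadj, _⟩
          rcases (hNu y).mp hadj with h | h | h <;> simp [h]
        · have hzu' : z ≠ u := fun e => hzu e.symm
          rcases em (x = z) with rfl | hzx
          · rw [hgx] at hz0; exact absurd hz0 hc0
          · have hzx' : z ≠ x := fun e => hzx e.symm
            rw [hgelse z hzu' hzx'] at hz0
            refine le_trans (Set.ncard_le_ncard ?_ (Set.toFinite _)) (HQ0 z hzu' hz0)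
            rintro y ⟨hadj, hcol⟩
            rcases em (u = y) with rfl | hyu
            · rcases hNu' z hadj with h | h | h
              · rw [h] at hz0; exact absurd hz0 hfv
              · rw [h] at hz0; exact absurd hz0 hfw
              · exact absurd h hzx'
            · have hyu' : y ≠ u := fun e => hyu e.symm
              rcases em (x = y) with rfl | hyx
              · rw [hgx] at hcol; exact absurd hcol hc0
              · have hyx' : y ≠ x := fun e => hyx e.symm
                rw [hgelse y hyu' hyx'] at hcol
                exact ⟨hyu', hadj, hcol⟩
      · intro z hz0 y hadj hcol
        rcases em (u = z) with rfl | hzu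
        · rw [hgu] at hz0; exact hz0 rfl
        · have hzu' : z ≠ u := fun e => hzu e.symm
          rcases em (x = z) with rfl | hzx
          · rw [hgx] at hcol
            rcases em (u = y) with rfl | hyu
            · rw [hgu] at hcol; exact hc0 hcol.symm
            · have hyu' : y ≠ u := fun e => hyu e.symm
              rcases em (x = y) with rfl | hyx
              · exact G.loopless.irrefl x hadj
              · have hyx' : y ≠ x := fun e => hyx e.symm
                rw [hgelse y hyu' hyx'] at hcol
                exact hkey y hyu' hadj hcol
          · have hzx' : z ≠ x := fun e => hzx e.symm
            rw [hgelse z hzu' hzx'] at hz0 hcol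
            rcases em (u = y) with rfl | hyu
            · rw [hgu] at hcol; exact hz0 hcol.symm
            · have hyu' : y ≠ u := fun e => hyu e.symm
              rcases em (x = y) with rfl | hyx
              · rw [hgx] at hcol
                exact hkey z hzu' hadj.symm hcol.symm
              · have hyx' : y ≠ x := fun e => hyx e.symm
                rw [hgelse y hyu' hyx'] at hcol
                exact hz0 (HQ1 z y hzu' hyu' hadj hcol)
    · rcases em (f w = 0 ∧ 3 ≤ {y | y ≠ u ∧ G.Adj w y ∧ f y = 0}.ncard) with hC2 | hC2
      · -- Case C2 : w is colored 0 and saturated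
        obtain ⟨hfw0, hZw⟩ := hC2
        have hfv : f v ≠ 0 := by
          intro h0
          have h1' : f x = 1 := by
            rcases hA1 with h | h | h
            · rw [h0] at h; exact absurd h (Ne.symm h10)
            · rw [hfw0] at h; exact absurd h (Ne.symm h10)
            · exact h
          have h2' : f x = 2 := by
            rcases hA2 with h | h | h
            · rw [h0] at h; exact absurd h (Ne.symm h20)
            · rw [hfw0] at h; exact absurd h (Ne.symm h20)
            · exact h
          rw [h1'] at h2'; exact h12ne h2'
        have hfx : f x ≠ 0 := by
          intro h0
          have h1' : f v = 1 := by
            rcases hA1 with h | h | h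
            · exact h
            · rw [hfw0] at h; exact absurd h (Ne.symm h10)
            · rw [h0] at h; exact absurd h (Ne.symm h10)
          have h2' : f v = 2 := by
            rcases hA2 with h | h | h
            · exact h
            · rw [hfw0] at h; exact absurd h (Ne.symm h20)
            · rw [h0] at h; exact absurd h (Ne.symm h20)
          rw [h1'] at h2'; exact h12ne h2'
        have hab : f v ≠ f x := by
          intro e
          have h1' : f v = 1 := by
            rcases hA1 with h | h | h
            · exact h
            · rw [hfw0] at h; exact absurd h (Ne.symm h10)
            · rw [← e] at h; exact h
          have h2' : f v = 2 := by
            rcases hA2 with h | h | h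
            · exact h
            · rw [hfw0] at h; exact absurd h (Ne.symm h20)
            · rw [← e] at h; exact h
          rw [h1'] at h2'; exact h12ne h2'
        rcases em (∃ o, o ≠ u ∧ G.Adj w o ∧ f o = f x) with ho | ho
        · -- C2b : w has a neighbor (≠ u) colored f x
          obtain ⟨o, hou, hwo, hofx⟩ := ho
          have hαu : ∀ y, y ≠ u → G.Adj w y → f y = f v → y = v := by
            intro y hyu hadj hyα
            by_contra hyv
            have h6 : 6 ≤ {y | y ≠ u ∧ G.Adj w y}.ncard := by
              refine aux3 (fun t ht => ⟨ht.1, ht.2.1⟩) hZw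
                ⟨huv.ne', hvw.symm⟩ ⟨hou, hwo⟩ ⟨hyu, hadj⟩ ?_ ?_ ?_ ?_ ?_ ?_
              · intro hm; exact hfv hm.2.2
              · intro hm; rw [hm.2.2] at hofx; exact hfx hofx.symm
              · intro hm; rw [hm.2.2] at hyα; exact hfv hyα.symm
              · intro e; rw [← e] at hofx; exact hab hofx
              · exact fun e => hyv e.symm
              · intro e; rw [e] at hofx; rw [hyα] at hofx; exact hab hofx
            omega
          rcases em (f v' = f x) with hv'β | hv'β
          · -- C2b-ii : recolor u ↦ 0, v ↦ 0, w ↦ f v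
            set g : V → Fin 3 := fun z =>
              if z = u then 0 else if z = v then 0 else if z = w then f v else f z with hg
            have hgu : g u = 0 := by simp [hg]
            have hgv : g v = 0 := by simp [hg, huv.ne']
            have hgw : g w = f v := by simp [hg, huw.ne', hvw.ne']
            have hgelse : ∀ z, z ≠ u → z ≠ v → z ≠ w → g z = f z := by
              intro z h1 h2 h3; simp [hg, h1, h2, h3]
            apply hmin.1
            refine ⟨g, build g ?_ ?_⟩
            · intro z hz0
              rcases em (u = z) with rfl | hzu
              · refine sSub3 (a := v) (b := w) (c := x) ?_
                rintro y ⟨hadj, _⟩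
                rcases (hNu y).mp hadj with h | h | h <;> simp [h]
              · have hzu' : z ≠ u := fun e => hzu e.symm
                rcases em (v = z) with rfl | hzv
                · refine sSub3 (a := u) (b := w) (c := v') ?_
                  rintro y ⟨hadj, _⟩
                  rcases (hNv y).mp hadj with h | h | h <;> simp [h]
                · have hzv' : z ≠ v := fun e => hzv e.symm
                  rcases em (w = z) with rfl | hzw
                  · rw [hgw] at hz0; exact absurd hz0 hfv
                  · have hzw' : z ≠ w := fun e => hzw e.symm
                    rw [hgelse z hzu' hzv' hzw'] at hz0
                    refine le_trans (Set.ncard_le_ncard ?_ (Set.toFinite _)) (HQ0 z hzu' hz0)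
                    rintro y ⟨hadj, hcol⟩
                    rcases em (u = y) with rfl | hyu
                    · rcases hNu' z hadj with h | h | h
                      · exact absurd h hzv'
                      · exact absurd h hzw'
                      · rw [h] at hz0; exact absurd hz0 hfx
                    · have hyu' : y ≠ u := fun e => hyu e.symm
                      rcases em (v = y) with rfl | hyv
                      · rcases hNv' z hadj with h | h | h
                        · exact absurd h hzu'
                        · exact absurd h hzw'
                        · rw [h] at hz0; rw [hv'β] at hz0; exact absurd hz0 hfx
                      · have hyv' : y ≠ v := fun e => hyv e.symm
                        rcases em (w = y) with rfl | hyw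
                        · rw [hgw] at hcol; exact absurd hcol hfv
                        · have hyw' : y ≠ w := fun e => hyw e.symm
                          rw [hgelse y hyu' hyv' hyw'] at hcol
                          exact ⟨hyu', hadj, hcol⟩
            · intro z hz0 y hadj hcol
              rcases em (u = z) with rfl | hzu
              · rw [hgu] at hz0; exact hz0 rfl
              · have hzu' : z ≠ u := fun e => hzu e.symm
                rcases em (v = z) with rfl | hzv
                · rw [hgv] at hz0; exact hz0 rfl
                · have hzv' : z ≠ v := fun e => hzv e.symm
                  rcases em (w = z) with rfl | hzw
                  · rw [hgw] at hcol
                    rcases em (u = y) with rfl | hyu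
                    · rw [hgu] at hcol; exact hfv hcol.symm
                    · have hyu' : y ≠ u := fun e => hyu e.symm
                      rcases em (v = y) with rfl | hyv
                      · rw [hgv] at hcol; exact hfv hcol.symm
                      · have hyv' : y ≠ v := fun e => hyv e.symm
                        rcases em (w = y) with rfl | hyw
                        · exact G.loopless.irrefl w hadj
                        · have hyw' : y ≠ w := fun e => hyw e.symm
                          rw [hgelse y hyu' hyv' hyw'] at hcol
                          exact hyv' (hαu y hyu' hadj hcol)
                  · have hzw' : z ≠ w := fun e => hzw e.symm
                    rw [hgelse z hzu' hzv' hzw'] at hz0 hcol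
                    rcases em (u = y) with rfl | hyu
                    · rw [hgu] at hcol; exact hz0 hcol.symm
                    · have hyu' : y ≠ u := fun e => hyu e.symm
                      rcases em (v = y) with rfl | hyv
                      · rw [hgv] at hcol; exact hz0 hcol.symm
                      · have hyv' : y ≠ v := fun e => hyv e.symm
                        rcases em (w = y) with rfl | hyw
                        · rw [hgw] at hcol
                          exact hzv' (hαu z hzu' hadj.symm hcol.symm)
                        · have hyw' : y ≠ w := fun e => hyw e.symm
                          rw [hgelse y hyu' hyv' hyw'] at hcol
                          exact hz0 (HQ1 z y hzu' hyu' hadj hcol)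
          · -- C2b-i : recolor u ↦ f v, v ↦ f x
            set g : V → Fin 3 := fun z =>
              if z = u then f v else if z = v then f x else f z with hg
            have hgu : g u = f v := by simp [hg]
            have hgv : g v = f x := by simp [hg, huv.ne']
            have hgelse : ∀ z, z ≠ u → z ≠ v → g z = f z := by
              intro z h1 h2; simp [hg, h1, h2]
            have hv'v : v' ≠ v := hAdjvv'.ne'
            apply hmin.1
            refine ⟨g, build g ?_ ?_⟩
            · intro z hz0
              rcases em (u = z) with rfl | hzu
              · rw [hgu] at hz0; exact absurd hz0 hfv
              · have hzu' : z ≠ u := fun e => hzu e.symm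
                rcases em (v = z) with rfl | hzv
                · rw [hgv] at hz0; exact absurd hz0 hfx
                · have hzv' : z ≠ v := fun e => hzv e.symm
                  rw [hgelse z hzu' hzv'] at hz0
                  refine le_trans (Set.ncard_le_ncard ?_ (Set.toFinite _)) (HQ0 z hzu' hz0)
                  rintro y ⟨hadj, hcol⟩
                  rcases em (u = y) with rfl | hyu
                  · rw [hgu] at hcol; exact absurd hcol hfv
                  · have hyu' : y ≠ u := fun e => hyu e.symm
                    rcases em (v = y) with rfl | hyv
                    · rw [hgv] at hcol; exact absurd hcol hfx
                    · have hyv' : y ≠ v := fun e => hyv e.symm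
                      rw [hgelse y hyu' hyv'] at hcol
                      exact ⟨hyu', hadj, hcol⟩
            · intro z hz0 y hadj hcol
              rcases em (u = z) with rfl | hzu
              · rw [hgu] at hcol
                rcases (hNu y).mp hadj with h | h | h
                · rw [h] at hcol; rw [hgv] at hcol; exact hab hcol.symm
                · rw [h] at hcol; rw [hgelse w huw.ne' hvw.ne'] at hcol
                  rw [hfw0] at hcol; exact hfv hcol.symm
                · rw [h] at hcol; rw [hgelse x hxu hxv] at hcol
                  exact hab hcol.symm
              · have hzu' : z ≠ u := fun e => hzu e.symm
                rcases em (v = z) with rfl | hzv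
                · rw [hgv] at hcol
                  rcases (hNv y).mp hadj with h | h | h
                  · rw [h] at hcol; rw [hgu] at hcol; exact hab hcol
                  · rw [h] at hcol; rw [hgelse w huw.ne' hvw.ne'] at hcol
                    rw [hfw0] at hcol; exact hfx hcol.symm
                  · rw [h] at hcol; rw [hgelse v' hv'u hv'v] at hcol
                    exact hv'β hcol
                · have hzv' : z ≠ v := fun e => hzv e.symm
                  rw [hgelse z hzu' hzv'] at hz0 hcol
                  rcases em (u = y) with rfl | hyu
                  · rw [hgu] at hcol
                    rcases hNu' z hadj with h | h | h
                    · exact absurd h hzv'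
                    · rw [h] at hz0; exact hz0 hfw0
                    · rw [h] at hcol; exact hab hcol
                  · have hyu' : y ≠ u := fun e => hyu e.symm
                    rcases em (v = y) with rfl | hyv
                    · rw [hgv] at hcol
                      rcases hNv' z hadj with h | h | h
                      · exact absurd h hzu'
                      · rw [h] at hz0; exact hz0 hfw0
                      · rw [h] at hcol; exact hv'β hcol.symm
                    · have hyv' : y ≠ v := fun e => hyv e.symm
                      rw [hgelse y hyu' hyv'] at hcol
                      exact hz0 (HQ1 z y hzu' hyu' hadj hcol)
        · -- C2a : no neighbor of w (other than u) is colored f x : recolor u ↦ 0, w ↦ f x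
          set g : V → Fin 3 := fun z =>
            if z = u then 0 else if z = w then f x else f z with hg
          have hgu : g u = 0 := by simp [hg]
          have hgw : g w = f x := by simp [hg, huw.ne']
          have hgelse : ∀ z, z ≠ u → z ≠ w → g z = f z := by
            intro z h1 h2; simp [hg, h1, h2]
          apply hmin.1
          refine ⟨g, build g ?_ ?_⟩
          · intro z hz0
            rcases em (u = z) with rfl | hzu
            · refine sSub3 (a := v) (b := w) (c := x) ?_
              rintro y ⟨hadj, _⟩
              rcases (hNu y).mp hadj with h | h | h <;> simp [h]
            · have hzu' : z ≠ u := fun e => hzu e.symm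
              rcases em (w = z) with rfl | hzw
              · rw [hgw] at hz0; exact absurd hz0 hfx
              · have hzw' : z ≠ w := fun e => hzw e.symm
                rw [hgelse z hzu' hzw'] at hz0
                refine le_trans (Set.ncard_le_ncard ?_ (Set.toFinite _)) (HQ0 z hzu' hz0)
                rintro y ⟨hadj, hcol⟩
                rcases em (u = y) with rfl | hyu
                · rcases hNu' z hadj with h | h | h
                  · rw [h] at hz0; exact absurd hz0 hfv
                  · exact absurd h hzw'
                  · rw [h] at hz0; exact absurd hz0 hfx
                · have hyu' : y ≠ u := fun e => hyu e.symm
                  rcases em (w = y) with rfl | hyw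
                  · rw [hgw] at hcol; exact absurd hcol hfx
                  · have hyw' : y ≠ w := fun e => hyw e.symm
                    rw [hgelse y hyu' hyw'] at hcol
                    exact ⟨hyu', hadj, hcol⟩
          · intro z hz0 y hadj hcol
            rcases em (u = z) with rfl | hzu
            · rw [hgu] at hz0; exact hz0 rfl
            · have hzu' : z ≠ u := fun e => hzu e.symm
              rcases em (w = z) with rfl | hzw
              · rw [hgw] at hcol
                rcases em (u = y) with rfl | hyu
                · rw [hgu] at hcol; exact hfx hcol.symm
                · have hyu' : y ≠ u := fun e => hyu e.symm
                  rcases em (w = y) with rfl | hyw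
                  · exact G.loopless.irrefl w hadj
                  · have hyw' : y ≠ w := fun e => hyw e.symm
                    rw [hgelse y hyu' hyw'] at hcol
                    exact ho ⟨y, hyu', hadj, hcol⟩
              · have hzw' : z ≠ w := fun e => hzw e.symm
                rw [hgelse z hzu' hzw'] at hz0 hcol
                rcases em (u = y) with rfl | hyu
                · rw [hgu] at hcol; exact hz0 hcol.symm
                · have hyu' : y ≠ u := fun e => hyu e.symm
                  rcases em (w = y) with rfl | hyw
                  · rw [hgw] at hcol
                    exact ho ⟨z, hzu', hadj.symm, hcol.symm⟩
                  · have hyw' : y ≠ w := fun e => hyw e.symm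
                    rw [hgelse y hyu' hyw'] at hcol
                    exact hz0 (HQ1 z y hzu' hyu' hadj hcol)
      · -- Case B : recolor u ↦ 0
        push_neg at hC1 hC2
        set g : V → Fin 3 := fun z => if z = u then 0 else f z with hg
        have hgu : g u = 0 := by simp [hg]
        have hgelse : ∀ z, z ≠ u → g z = f z := by
          intro z h1; simp [hg, h1]
        apply hmin.1
        refine ⟨g, build g ?_ ?_⟩
        · intro z hz0
          rcases em (u = z) with rfl | hzu
          · refine sSub3 (a := v) (b := w) (c := x) ?_
            rintro y ⟨hadj, _⟩
            rcases (hNu y).mp hadj with h | h | h <;> simp [h]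
          · have hzu' : z ≠ u := fun e => hzu e.symm
            rcases em (v = z) with rfl | hzv
            · refine sSub3 (a := u) (b := w) (c := v') ?_
              rintro y ⟨hadj, _⟩
              rcases (hNv y).mp hadj with h | h | h <;> simp [h]
            · have hzv' : z ≠ v := fun e => hzv e.symm
              rw [hgelse z hzu'] at hz0
              rcases em (w = z) with rfl | hzw
              · have hsafe : {y | y ≠ u ∧ G.Adj w y ∧ f y = 0}.ncard ≤ 2 := by
                  have := hC2 hz0
                  omega
                refine sSubIns (a := u) (t := {y | y ≠ u ∧ G.Adj w y ∧ f y = 0}) ?_ hsafe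
                rintro y ⟨hadj, hcol⟩
                rcases em (u = y) with rfl | hyu
                · exact Set.mem_insert _ _
                · have hyu' : y ≠ u := fun e => hyu e.symm
                  rw [hgelse y hyu'] at hcol
                  exact Set.mem_insert_of_mem _ ⟨hyu', hadj, hcol⟩
              · have hzw' : z ≠ w := fun e => hzw e.symm
                rcases em (x = z) with rfl | hzx
                · have hsafe : {y | y ≠ u ∧ G.Adj x y ∧ f y = 0}.ncard ≤ 2 := by
                    have := hC1 hz0
                    omega
                  refine sSubIns (a := u) (t := {y | y ≠ u ∧ G.Adj x y ∧ f y = 0}) ?_ hsafe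
                  rintro y ⟨hadj, hcol⟩
                  rcases em (u = y) with rfl | hyu
                  · exact Set.mem_insert _ _
                  · have hyu' : y ≠ u := fun e => hyu e.symm
                    rw [hgelse y hyu'] at hcol
                    exact Set.mem_insert_of_mem _ ⟨hyu', hadj, hcol⟩
                · have hzx' : z ≠ x := fun e => hzx e.symm
                  refine le_trans (Set.ncard_le_ncard ?_ (Set.toFinite _)) (HQ0 z hzu' hz0)
                  rintro y ⟨hadj, hcol⟩
                  rcases em (u = y) with rfl | hyu
                  · rcases hNu' z hadj with h | h | h
                    · exact absurd h hzv'
                    · exact absurd h hzw'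
                    · exact absurd h hzx'
                  · have hyu' : y ≠ u := fun e => hyu e.symm
                    rw [hgelse y hyu'] at hcol
                    exact ⟨hyu', hadj, hcol⟩
        · intro z hz0 y hadj hcol
          rcases em (u = z) with rfl | hzu
          · rw [hgu] at hz0; exact hz0 rfl
          · have hzu' : z ≠ u := fun e => hzu e.symm
            rw [hgelse z hzu'] at hz0 hcol
            rcases em (u = y) with rfl | hyu
            · rw [hgu] at hcol; exact hz0 hcol.symm
            · have hyu' : y ≠ u := fun e => hyu e.symm
              rw [hgelse y hyu'] at hcol
              exact hz0 (HQ1 z y hzu' hyu' hadj hcol)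
  · -- Case A with color 2
    push_neg at hA2
    obtain ⟨hnv, hnw, hnx⟩ := hA2
    set g : V → Fin 3 := fun z => if z = u then 2 else f z with hg
    have hgu : g u = 2 := by simp [hg]
    have hgelse : ∀ z, z ≠ u → g z = f z := by
      intro z h1; simp [hg, h1]
    apply hmin.1
    refine ⟨g, build g ?_ ?_⟩
    · intro z hz0
      rcases em (u = z) with rfl | hzu
      · rw [hgu] at hz0; exact absurd hz0 h20
      · have hzu' : z ≠ u := fun e => hzu e.symm
        rw [hgelse z hzu'] at hz0
        refine le_trans (Set.ncard_le_ncard ?_ (Set.toFinite _)) (HQ0 z hzu' hz0)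
        rintro y ⟨hadj, hcol⟩
        rcases em (u = y) with rfl | hyu
        · rw [hgu] at hcol; exact absurd hcol h20
        · have hyu' : y ≠ u := fun e => hyu e.symm
          rw [hgelse y hyu'] at hcol
          exact ⟨hyu', hadj, hcol⟩
    · intro z hz0 y hadj hcol
      rcases em (u = z) with rfl | hzu
      · rw [hgu] at hcol
        rcases (hNu y).mp hadj with h | h | h
        · rw [h] at hcol; rw [hgelse v huv.ne'] at hcol; exact hnv hcol
        · rw [h] at hcol; rw [hgelse w huw.ne'] at hcol; exact hnw hcol
        · rw [h] at hcol; rw [hgelse x hxu] at hcol; exact hnx hcol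
      · have hzu' : z ≠ u := fun e => hzu e.symm
        rw [hgelse z hzu'] at hz0 hcol
        rcases em (u = y) with rfl | hyu
        · rw [hgu] at hcol
          rcases hNu' z hadj with h | h | h
          · rw [h] at hcol; exact hnv hcol.symm
          · rw [h] at hcol; exact hnw hcol.symm
          · rw [h] at hcol; exact hnx hcol.symm
        · have hyu' : y ≠ u := fun e => hyu e.symm
          rw [hgelse y hyu'] at hcol
          exact hz0 (HQ1 z y hzu' hyu' hadj hcol)
  · -- Case A with color 1
    push_neg at hA1
    obtain ⟨hnv, hnw, hnx⟩ := hA1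
    set g : V → Fin 3 := fun z => if z = u then 1 else f z with hg
    have hgu : g u = 1 := by simp [hg]
    have hgelse : ∀ z, z ≠ u → g z = f z := by
      intro z h1; simp [hg, h1]
    apply hmin.1
    refine ⟨g, build g ?_ ?_⟩
    · intro z hz0
      rcases em (u = z) with rfl | hzu
      · rw [hgu] at hz0; exact absurd hz0 h10
      · have hzu' : z ≠ u := fun e => hzu e.symm
        rw [hgelse z hzu'] at hz0
        refine le_trans (Set.ncard_le_ncard ?_ (Set.toFinite _)) (HQ0 z hzu' hz0)
        rintro y ⟨hadj, hcol⟩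
        rcases em (u = y) with rfl | hyu
        · rw [hgu] at hcol; exact absurd hcol h10
        · have hyu' : y ≠ u := fun e => hyu e.symm
          rw [hgelse y hyu'] at hcol
          exact ⟨hyu', hadj, hcol⟩
    · intro z hz0 y hadj hcol
      rcases em (u = z) with rfl | hzu
      · rw [hgu] at hcol
        rcases (hNu y).mp hadj with h | h | h
        · rw [h] at hcol; rw [hgelse v huv.ne'] at hcol; exact hnv hcol
        · rw [h] at hcol; rw [hgelse w huw.ne'] at hcol; exact hnw hcol
        · rw [h] at hcol; rw [hgelse x hxu] at hcol; exact hnx hcol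
      · have hzu' : z ≠ u := fun e => hzu e.symm
        rw [hgelse z hzu'] at hz0 hcol
        rcases em (u = y) with rfl | hyu
        · rw [hgu] at hcol
          rcases hNu' z hadj with h | h | h
          · rw [h] at hcol; exact hnv hcol.symm
          · rw [h] at hcol; exact hnw hcol.symm
          · rw [h] at hcol; exact hnx hcol.symm
        · have hyu' : y ≠ u := fun e => hyu e.symm
          rw [hgelse y hyu'] at hcol
          exact hz0 (HQ1 z y hzu' hyu' hadj hcol)
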